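/- Let G be a finite simple graph with Ore-degree θ(G) ≤ 7 such that G admits no strong edge-coloring with 13 colors but every proper subgraph of G admits a strong edge-coloring with 13 colors. Then G contains no cycle of length 3; that is, G is triangle-free. -/

import Mathlib

/-- Two edges `e` and `f` of a graph `G` *see* each other if they are contained in a
common path or cycle of length at most three, i.e. they share an endpoint or some
endpoint of `e` is adjacent to some endpoint of `f`. -/
def SimpleGraph.Sees {V : Type*} (G : SimpleGraph V) (e f : Sym2 V) : Prop :=
  ∃ u ∈ e, ∃ v ∈ f, u = v ∨ G.Adj u v

/-- `c` is a strong edge-coloring of `G`: edges that see each other get distinct colors. -/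
def SimpleGraph.IsStrongEdgeColoring {V α : Type*} (G : SimpleGraph V) (c : Sym2 V → α) : Prop :=
  ∀ e ∈ G.edgeSet, ∀ f ∈ G.edgeSet, e ≠ f → G.Sees e f → c e ≠ c f

/-- `G` admits a strong edge-coloring with `n` colors. -/
def SimpleGraph.HasStrongColoring {V : Type*} (G : SimpleGraph V) (n : ℕ) : Prop :=
  ∃ c : Sym2 V → Fin n, G.IsStrongEdgeColoring c

set_option linter.unusedSectionVars false
set_option linter.unusedVariables false
set_option maxHeartbeats 1000000

namespace StrongAux

variable {V : Type*}

lemma sees_symm {G : SimpleGraph V} {e f : Sym2 V} (h : G.Sees e f) : G.Sees f e := by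
  obtain ⟨p, hp, r, hr, h⟩ := h
  exact ⟨r, hr, p, hp, h.imp Eq.symm (fun a => a.symm)⟩

def Valid (G : SimpleGraph V) (c : Sym2 V → Fin 13) (Q : Sym2 V → Prop) : Prop :=
  ∀ e ∈ G.edgeSet, Q e → ∀ g ∈ G.edgeSet, Q g → e ≠ g → G.Sees e g → c e ≠ c g

lemma valid_congr {G : SimpleGraph V} {c : Sym2 V → Fin 13} {Q Q' : Sym2 V → Prop}
    (h : ∀ g, Q g ↔ Q' g) (hv : Valid G c Q) : Valid G c Q' := by
  intro e he hQe g hg hQg hne hsee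
  exact hv e he ((h e).2 hQe) g hg ((h g).2 hQg) hne hsee

lemma sym2_ne_left {α β γ δ : V} (h1 : α ≠ γ) (h2 : α ≠ δ) : s(α,β) ≠ s(γ,δ) := by
  intro h; rw [Sym2.eq_iff] at h
  rcases h with ⟨h,_⟩|⟨h,_⟩
  exacts [h1 h, h2 h]

lemma sym2_ne_right {α β γ δ : V} (h1 : β ≠ γ) (h2 : β ≠ δ) : s(α,β) ≠ s(γ,δ) := by
  intro h; rw [Sym2.eq_iff] at h
  rcases h with ⟨_,h⟩|⟨_,h⟩
  exacts [h2 h, h1 h]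

variable [Fintype V] [DecidableEq V]

noncomputable def seenSet (G : SimpleGraph V) (Q : Sym2 V → Prop) (f : Sym2 V) : Finset (Sym2 V) :=
  @Finset.filter _ (fun g => g ∈ G.edgeSet ∧ Q g ∧ G.Sees f g) (Classical.decPred _) Finset.univ

lemma mem_seenSet {G : SimpleGraph V} {Q : Sym2 V → Prop} {f g : Sym2 V} :
    g ∈ seenSet G Q f ↔ g ∈ G.edgeSet ∧ Q g ∧ G.Sees f g := by
  simp [seenSet]

lemma step {G : SimpleGraph V} {c : Sym2 V → Fin 13} {Q : Sym2 V → Prop} {f : Sym2 V}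
    (hfE : f ∈ G.edgeSet) (hfQ : ¬ Q f) (hval : Valid G c Q)
    (hcard : (seenSet G Q f).card ≤ 12) :
    ∃ c' : Sym2 V → Fin 13, Valid G c' (fun g => Q g ∨ g = f) := by
  classical
  have hcardS : ((seenSet G Q f).image c).card < Fintype.card (Fin 13) := by
    have := Finset.card_image_le (s := seenSet G Q f) (f := c)
    simp only [Fintype.card_fin]
    omega
  have hne : ((seenSet G Q f).image c)ᶜ.Nonempty := by
    rw [← Finset.card_pos, Finset.card_compl]
    omega
  obtain ⟨k, hk⟩ := hne
  rw [Finset.mem_compl] at hk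
  have hkey : ∀ g ∈ G.edgeSet, Q g → G.Sees f g → c g ≠ k := by
    intro g hg hQg hsee h
    exact hk (h ▸ Finset.mem_image_of_mem c (mem_seenSet.2 ⟨hg, hQg, hsee⟩))
  refine ⟨Function.update c f k, ?_⟩
  intro e he hQe g hg hQg hne' hsee
  rcases hQe with hQe | heq
  · have hef : e ≠ f := fun h => hfQ (h ▸ hQe)
    rw [Function.update_of_ne hef]
    rcases hQg with hQg | heq'
    · have hgf : g ≠ f := fun h => hfQ (h ▸ hQg)
      rw [Function.update_of_ne hgf]
      exact hval e he hQe g hg hQg hne' hsee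
    · subst heq'
      rw [Function.update_self]
      exact hkey e he hQe (sees_symm hsee)
  · subst heq
    rw [Function.update_self]
    rcases hQg with hQg | heq'
    · have hgf : g ≠ e := fun h => hfQ (h ▸ hQg)
      rw [Function.update_of_ne hgf]
      exact fun h => hkey g hg hQg hsee h.symm
    · exact absurd heq'.symm hne'

section Counting

variable {G : SimpleGraph V} [DecidableRel G.Adj] {u v : V}

lemma smu_mem_inc {z x : V} (h : G.Adj z x) : s(z,x) ∈ G.incidenceFinset z := by
  rw [SimpleGraph.mem_incidenceFinset]
  exact ⟨(SimpleGraph.mem_edgeSet G).2 h, by simp⟩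

lemma inc_filter_card_le₁ {z : V} (h : G.Adj z u) :
    ((G.incidenceFinset z).filter (fun g => ¬(u ∈ g ∨ v ∈ g))).card + 1 ≤ G.degree z := by
  have hmem : s(z,u) ∈ G.incidenceFinset z := smu_mem_inc h
  have hsub : (G.incidenceFinset z).filter (fun g => ¬(u ∈ g ∨ v ∈ g)) ⊆
      (G.incidenceFinset z).erase s(z,u) := by
    intro g hg
    rw [Finset.mem_filter] at hg
    refine Finset.mem_erase.2 ⟨?_, hg.1⟩
    rintro rfl
    exact hg.2 (Or.inl (by simp))
  have := Finset.card_le_card hsub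
  rw [Finset.card_erase_of_mem hmem, G.card_incidenceFinset_eq_degree z] at this
  have hpos : 0 < G.degree z := by
    rw [← SimpleGraph.card_neighborFinset_eq_degree]
    exact Finset.card_pos.2 ⟨u, (SimpleGraph.mem_neighborFinset _ _ _).2 h⟩
  omega

lemma inc_filter_card_le₁v {z : V} (h : G.Adj z v) :
    ((G.incidenceFinset z).filter (fun g => ¬(u ∈ g ∨ v ∈ g))).card + 1 ≤ G.degree z := by
  have hmem : s(z,v) ∈ G.incidenceFinset z := smu_mem_inc h
  have hsub : (G.incidenceFinset z).filter (fun g => ¬(u ∈ g ∨ v ∈ g)) ⊆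
      (G.incidenceFinset z).erase s(z,v) := by
    intro g hg
    rw [Finset.mem_filter] at hg
    refine Finset.mem_erase.2 ⟨?_, hg.1⟩
    rintro rfl
    exact hg.2 (Or.inr (by simp))
  have := Finset.card_le_card hsub
  rw [Finset.card_erase_of_mem hmem, G.card_incidenceFinset_eq_degree z] at this
  have hpos : 0 < G.degree z := by
    rw [← SimpleGraph.card_neighborFinset_eq_degree]
    exact Finset.card_pos.2 ⟨v, (SimpleGraph.mem_neighborFinset _ _ _).2 h⟩
  omega

lemma inc_filter_card_le₂ {z : V} (huv : u ≠ v) (h1 : G.Adj z u) (h2 : G.Adj z v) :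
    ((G.incidenceFinset z).filter (fun g => ¬(u ∈ g ∨ v ∈ g))).card + 2 ≤ G.degree z := by
  have hm1 : s(z,u) ∈ G.incidenceFinset z := smu_mem_inc h1
  have hm2 : s(z,v) ∈ (G.incidenceFinset z).erase s(z,u) := by
    refine Finset.mem_erase.2 ⟨?_, smu_mem_inc h2⟩
    intro h
    rw [Sym2.eq_iff] at h
    rcases h with ⟨_, h⟩ | ⟨h, h'⟩
    · exact huv h.symm
    · exact G.irrefl (h ▸ h1)
  have hsub : (G.incidenceFinset z).filter (fun g => ¬(u ∈ g ∨ v ∈ g)) ⊆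
      ((G.incidenceFinset z).erase s(z,u)).erase s(z,v) := by
    intro g hg
    rw [Finset.mem_filter] at hg
    refine Finset.mem_erase.2 ⟨?_, Finset.mem_erase.2 ⟨?_, hg.1⟩⟩
    · rintro rfl; exact hg.2 (Or.inr (by simp))
    · rintro rfl; exact hg.2 (Or.inl (by simp))
  have := Finset.card_le_card hsub
  rw [Finset.card_erase_of_mem hm2, Finset.card_erase_of_mem hm1,
    G.card_incidenceFinset_eq_degree z] at this
  have hsub2 : ({u, v} : Finset V) ⊆ G.neighborFinset z := by
    intro t ht
    rw [SimpleGraph.mem_neighborFinset]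
    rcases Finset.mem_insert.1 ht with rfl | ht
    · exact h1
    · rw [Finset.mem_singleton] at ht; subst ht; exact h2
  have h2le : 2 ≤ G.degree z := by
    rw [← SimpleGraph.card_neighborFinset_eq_degree]
    calc 2 = ({u,v} : Finset V).card := by
            rw [Finset.card_insert_of_notMem (by simp [huv]), Finset.card_singleton]
      _ ≤ _ := Finset.card_le_card hsub2
  omega

lemma inc_filter_card_u :
    ((G.incidenceFinset u).filter (fun g => ¬(u ∈ g ∨ v ∈ g))).card = 0 := by
  rw [Finset.card_eq_zero, Finset.filter_eq_empty_iff]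
  intro g hg
  rw [SimpleGraph.mem_incidenceFinset] at hg
  exact fun h => h (Or.inl hg.2)

lemma master_count {m : V} {A : Finset V} (hmA : m ∈ A) (f : Sym2 V)
    (Pfin : Finset (Sym2 V))
    (hcov : ∀ p ∈ f, ∀ r : V, p = r ∨ G.Adj p r → r = u ∨ r = v ∨ r ∈ A ∨ G.Adj m r) :
    (seenSet G (fun g => (¬(u ∈ g ∨ v ∈ g)) ∨ g ∈ Pfin) f).card ≤
      Pfin.card + (∑ z ∈ A, ((G.incidenceFinset z).filter (fun g => ¬(u ∈ g ∨ v ∈ g))).card)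
        + (∑ z ∈ (((G.neighborFinset m).erase u).erase v) \ A, (G.degree z - 1)) := by
  classical
  set P : Sym2 V → Prop := fun g => ¬(u ∈ g ∨ v ∈ g) with hP
  set R : Finset V := (((G.neighborFinset m).erase u).erase v) \ A with hRdef
  have hsub : seenSet G (fun g => P g ∨ g ∈ Pfin) f ⊆
      (Pfin ∪ A.biUnion (fun z => (G.incidenceFinset z).filter P)) ∪
        R.biUnion (fun z => ((G.incidenceFinset z).erase s(z,m)).filter P) := by
    intro g hg
    rw [mem_seenSet] at hg
    obtain ⟨hgE, hQ, hsee⟩ := hg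
    rcases hQ with hnuv | hPf
    · obtain ⟨p, hp, r, hr, hor⟩ := hsee
      have hru : r ≠ u := fun h => hnuv (Or.inl (h ▸ hr))
      have hrv : r ≠ v := fun h => hnuv (Or.inr (h ▸ hr))
      have hin1 : ∀ z ∈ A, z ∈ g →
          g ∈ (Pfin ∪ A.biUnion (fun z => (G.incidenceFinset z).filter P)) ∪
            R.biUnion (fun z => ((G.incidenceFinset z).erase s(z,m)).filter P) := by
        intro z hzA hzg
        refine Finset.mem_union_left _ (Finset.mem_union_right _ (Finset.mem_biUnion.2 ⟨z, hzA, ?_⟩))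
        exact Finset.mem_filter.2 ⟨(SimpleGraph.mem_incidenceFinset _ _ _).2 ⟨hgE, hzg⟩, hnuv⟩
      rcases hcov p hp r hor with h | h | hA | hAdj
      · exact absurd h hru
      · exact absurd h hrv
      · exact hin1 r hA hr
      · by_cases hmg : m ∈ g
        · exact hin1 m hmA hmg
        · by_cases hrA : r ∈ A
          · exact hin1 r hrA hr
          · refine Finset.mem_union_right _ (Finset.mem_biUnion.2 ⟨r, ?_, ?_⟩)
            · exact Finset.mem_sdiff.2 ⟨Finset.mem_erase.2 ⟨hrv, Finset.mem_erase.2 ⟨hru,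
                (SimpleGraph.mem_neighborFinset _ _ _).2 hAdj⟩⟩, hrA⟩
            · refine Finset.mem_filter.2 ⟨Finset.mem_erase.2 ⟨?_,
                (SimpleGraph.mem_incidenceFinset _ _ _).2 ⟨hgE, hr⟩⟩, hnuv⟩
              rintro rfl
              exact hmg (by simp)
    · exact Finset.mem_union_left _ (Finset.mem_union_left _ hPf)
  calc (seenSet G (fun g => P g ∨ g ∈ Pfin) f).card
      ≤ _ := Finset.card_le_card hsub
    _ ≤ (Pfin ∪ A.biUnion (fun z => (G.incidenceFinset z).filter P)).card +
        (R.biUnion (fun z => ((G.incidenceFinset z).erase s(z,m)).filter P)).card :=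
        Finset.card_union_le _ _
    _ ≤ (Pfin.card + (A.biUnion (fun z => (G.incidenceFinset z).filter P)).card) +
        (R.biUnion (fun z => ((G.incidenceFinset z).erase s(z,m)).filter P)).card :=
        Nat.add_le_add_right (Finset.card_union_le _ _) _
    _ ≤ _ := by
        refine Nat.add_le_add (Nat.add_le_add_left Finset.card_biUnion_le _) ?_
        refine le_trans Finset.card_biUnion_le (Finset.sum_le_sum ?_)
        intro z hz
        have hzm : G.Adj z m := by
          have h1 := (Finset.mem_sdiff.1 hz).1
          have h2 := (Finset.mem_erase.1 h1).2
          have h3 := (Finset.mem_erase.1 h2).2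
          exact ((SimpleGraph.mem_neighborFinset _ _ _).1 h3).symm
        calc (((G.incidenceFinset z).erase s(z,m)).filter P).card
            ≤ ((G.incidenceFinset z).erase s(z,m)).card := Finset.card_filter_le _ _
          _ = (G.incidenceFinset z).card - 1 := Finset.card_erase_of_mem (smu_mem_inc hzm)
          _ = G.degree z - 1 := by rw [G.card_incidenceFinset_eq_degree z]

lemma sum_insert_le' (a : V) (s : Finset V) (f : V → ℕ) :
    (insert a s).sum f ≤ f a + s.sum f := by
  by_cases h : a ∈ s
  · rw [Finset.insert_eq_self.2 h]; omega
  · rw [Finset.sum_insert h]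

lemma ring_sum_le (hore : ∀ a b : V, G.Adj a b → G.degree a + G.degree b ≤ 7)
    (m : V) (S : Finset V) (hS : S ⊆ G.neighborFinset m) :
    (∑ z ∈ S, (G.degree z - 1)) ≤ S.card * (6 - G.degree m) := by
  have := Finset.sum_le_card_nsmul S (fun z => G.degree z - 1) (6 - G.degree m) ?_
  · simpa using this
  · intro z hz
    show G.degree z - 1 ≤ 6 - G.degree m
    have hadj : G.Adj m z := (SimpleGraph.mem_neighborFinset _ _ _).1 (hS hz)
    have h1 := hore m z hadj
    have h2 : 0 < G.degree z := by
      rw [← SimpleGraph.card_neighborFinset_eq_degree]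
      exact Finset.card_pos.2 ⟨m, (SimpleGraph.mem_neighborFinset _ _ _).2 hadj.symm⟩
    omega

lemma prod_bound : ∀ K : ℕ, K ≤ 4 → (K-1) * (6-K) ≤ 6 := by decide
lemma prod_bound' : ∀ d : ℕ, d ≤ 5 → (d-2) * (6-d) ≤ 4 := by decide

lemma ring_card_le₁ {m : V} (h : G.Adj m u) :
    ((((G.neighborFinset m).erase u).erase v) \ A).card ≤ G.degree m - 1 := by
  calc _ ≤ (((G.neighborFinset m).erase u).erase v).card :=
        Finset.card_le_card (Finset.sdiff_subset)
    _ ≤ ((G.neighborFinset m).erase u).card := Finset.card_erase_le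
    _ = G.degree m - 1 := by
        rw [Finset.card_erase_of_mem ((SimpleGraph.mem_neighborFinset _ _ _).2 h),
          SimpleGraph.card_neighborFinset_eq_degree]

lemma ring_card_le₁v {m : V} (h : G.Adj m v) :
    ((((G.neighborFinset m).erase u).erase v) \ A).card ≤ G.degree m - 1 := by
  calc _ ≤ (((G.neighborFinset m).erase u).erase v).card :=
        Finset.card_le_card (Finset.sdiff_subset)
    _ = (((G.neighborFinset m).erase v).erase u).card := by rw [Finset.erase_right_comm]
    _ ≤ ((G.neighborFinset m).erase v).card := Finset.card_erase_le
    _ = G.degree m - 1 := by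
        rw [Finset.card_erase_of_mem ((SimpleGraph.mem_neighborFinset _ _ _).2 h),
          SimpleGraph.card_neighborFinset_eq_degree]

lemma ring_card_le₂ {m : V} (huv : u ≠ v) (h1 : G.Adj m u) (h2 : G.Adj m v) :
    ((((G.neighborFinset m).erase u).erase v) \ A).card ≤ G.degree m - 2 := by
  calc _ ≤ (((G.neighborFinset m).erase u).erase v).card :=
        Finset.card_le_card (Finset.sdiff_subset)
    _ = G.degree m - 2 := by
        have hm1 : u ∈ G.neighborFinset m := (SimpleGraph.mem_neighborFinset _ _ _).2 h1
        have hm2 : v ∈ (G.neighborFinset m).erase u :=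
          Finset.mem_erase.2 ⟨huv.symm, (SimpleGraph.mem_neighborFinset _ _ _).2 h2⟩
        rw [Finset.card_erase_of_mem hm2, Finset.card_erase_of_mem hm1,
          SimpleGraph.card_neighborFinset_eq_degree]
        omega

end Counting

section Nbhd

variable {G : SimpleGraph V} [DecidableRel G.Adj] {a p q : V}

lemma pair_subset (hap : G.Adj a p) (haq : G.Adj a q) :
    ({p, q} : Finset V) ⊆ G.neighborFinset a := by
  intro t ht
  rw [SimpleGraph.mem_neighborFinset]
  rcases Finset.mem_insert.1 ht with rfl | ht
  · exact hap
  · rw [Finset.mem_singleton] at ht; subst ht; exact haq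

lemma pair_card (hpq : p ≠ q) : ({p, q} : Finset V).card = 2 := by
  rw [Finset.card_insert_of_notMem (by simp [hpq]), Finset.card_singleton]

lemma deg_ge_two (hap : G.Adj a p) (haq : G.Adj a q) (hpq : p ≠ q) : 2 ≤ G.degree a := by
  rw [← SimpleGraph.card_neighborFinset_eq_degree]
  calc 2 = ({p,q} : Finset V).card := (pair_card hpq).symm
    _ ≤ _ := Finset.card_le_card (pair_subset hap haq)

lemma sdiff_card (hap : G.Adj a p) (haq : G.Adj a q) (hpq : p ≠ q) :
    (G.neighborFinset a \ {p,q}).card = G.degree a - 2 := by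
  rw [Finset.card_sdiff_of_subset (pair_subset hap haq), pair_card hpq,
    SimpleGraph.card_neighborFinset_eq_degree]

lemma nbhd2 (hap : G.Adj a p) (haq : G.Adj a q) (hpq : p ≠ q) (hd : G.degree a = 2) :
    G.neighborFinset a = {p, q} := by
  refine (Finset.eq_of_subset_of_card_le (pair_subset hap haq) ?_).symm
  rw [SimpleGraph.card_neighborFinset_eq_degree, hd, pair_card hpq]

lemma nbhd3 (hap : G.Adj a p) (haq : G.Adj a q) (hpq : p ≠ q) (hd : G.degree a = 3) :
    ∃ x, x ≠ p ∧ x ≠ q ∧ G.Adj a x ∧ G.neighborFinset a = {p, q, x} := by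
  have hcs : (G.neighborFinset a \ {p,q}).card = 1 := by
    rw [sdiff_card hap haq hpq, hd]
  obtain ⟨x, hx⟩ := Finset.card_eq_one.1 hcs
  have hxm : x ∈ G.neighborFinset a \ {p,q} := hx ▸ Finset.mem_singleton_self x
  rw [Finset.mem_sdiff] at hxm
  refine ⟨x, ?_, ?_, (SimpleGraph.mem_neighborFinset _ _ _).1 hxm.1, ?_⟩
  · intro h; exact hxm.2 (by simp [h])
  · intro h; exact hxm.2 (by simp [h])
  · have h1 := Finset.union_sdiff_of_subset (pair_subset hap haq)
    rw [hx] at h1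
    rw [← h1]
    ext t
    simp only [Finset.mem_union, Finset.mem_insert, Finset.mem_singleton]
    tauto

lemma nbhd4 (hap : G.Adj a p) (haq : G.Adj a q) (hpq : p ≠ q) (hd : G.degree a = 4) :
    ∃ x y, x ≠ y ∧ x ≠ p ∧ x ≠ q ∧ y ≠ p ∧ y ≠ q ∧ G.Adj a x ∧ G.Adj a y ∧
      G.neighborFinset a = {p, q, x, y} := by
  have hcs : (G.neighborFinset a \ {p,q}).card = 2 := by
    rw [sdiff_card hap haq hpq, hd]
  obtain ⟨x, y, hxy, hs⟩ := Finset.card_eq_two.1 hcs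
  have hxm : x ∈ G.neighborFinset a \ {p,q} := hs ▸ (by simp)
  have hym : y ∈ G.neighborFinset a \ {p,q} := hs ▸ (by simp)
  rw [Finset.mem_sdiff] at hxm hym
  refine ⟨x, y, hxy, ?_, ?_, ?_, ?_, (SimpleGraph.mem_neighborFinset _ _ _).1 hxm.1,
    (SimpleGraph.mem_neighborFinset _ _ _).1 hym.1, ?_⟩
  · intro h; exact hxm.2 (by simp [h])
  · intro h; exact hxm.2 (by simp [h])
  · intro h; exact hym.2 (by simp [h])
  · intro h; exact hym.2 (by simp [h])
  · have h1 := Finset.union_sdiff_of_subset (pair_subset hap haq)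
    rw [hs] at h1
    rw [← h1]
    ext t
    simp only [Finset.mem_union, Finset.mem_insert, Finset.mem_singleton]
    tauto

lemma nbhd_cases (hap : G.Adj a p) (haq : G.Adj a q) (h : a ∈ G.neighborFinset a → False)
    {e : Sym2 V} (he : e ∈ G.edgeSet) (hae : a ∈ e) :
    ∃ z, z ∈ G.neighborFinset a ∧ e = s(a, z) := by
  revert he hae
  refine Sym2.ind (fun b c => ?_) e
  intro he hae
  rw [SimpleGraph.mem_edgeSet] at he
  rw [Sym2.mem_iff] at hae
  rcases hae with rfl | rfl
  · exact ⟨c, (SimpleGraph.mem_neighborFinset _ _ _).2 he, rfl⟩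
  · exact ⟨b, (SimpleGraph.mem_neighborFinset _ _ _).2 he.symm, Sym2.eq_swap⟩

end Nbhd

section Base

variable {G : SimpleGraph V} [DecidableRel G.Adj] {u v : V}

lemma base_valid (hmin : ∀ H : G.Subgraph, H ≠ ⊤ → H.coe.HasStrongColoring 13)
    (huv : G.Adj u v) :
    ∃ c₀ : Sym2 V → Fin 13, Valid G c₀ (fun g => ¬(u ∈ g ∨ v ∈ g)) := by
  classical
  set H : G.Subgraph := ⟨Set.univ, fun x y => G.Adj x y ∧ x ≠ u ∧ x ≠ v ∧ y ≠ u ∧ y ≠ v,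
    fun h => h.1, fun _ => Set.mem_univ _,
    ⟨fun x y h => ⟨h.1.symm, h.2.2.2.1, h.2.2.2.2, h.2.1, h.2.2.1⟩⟩⟩ with hH
  have hne : H ≠ ⊤ := by
    intro h
    have h2 : H.Adj u v := by rw [h]; exact SimpleGraph.Subgraph.top_adj.2 huv
    exact h2.2.1 rfl
  obtain ⟨c1, hc1⟩ := hmin H hne
  refine ⟨fun e => c1 (e.map (fun z => ⟨z, Set.mem_univ z⟩)), ?_⟩
  intro e he hQe g hg hQg hne' hsee
  revert he hQe hg hQg hne' hsee
  refine Sym2.inductionOn₂ e g ?_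
  intro a b p q he hQe hg hQg hne' hsee
  rw [SimpleGraph.mem_edgeSet] at he hg
  have hab : a ≠ u ∧ a ≠ v ∧ b ≠ u ∧ b ≠ v := by
    constructor
    · intro h; exact hQe (Or.inl (by simp [h]))
    constructor
    · intro h; exact hQe (Or.inr (by simp [h]))
    constructor
    · intro h; exact hQe (Or.inl (by simp [h]))
    · intro h; exact hQe (Or.inr (by simp [h]))
  have hpq : p ≠ u ∧ p ≠ v ∧ q ≠ u ∧ q ≠ v := by
    constructor
    · intro h; exact hQg (Or.inl (by simp [h]))
    constructor
    · intro h; exact hQg (Or.inr (by simp [h]))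
    constructor
    · intro h; exact hQg (Or.inl (by simp [h]))
    · intro h; exact hQg (Or.inr (by simp [h]))
  have hmemuv : ∀ z : V, z ∈ (s(a,b) : Sym2 V) → z ≠ u ∧ z ≠ v := by
    intro z hz
    rw [Sym2.mem_iff] at hz
    rcases hz with rfl | rfl
    · exact ⟨hab.1, hab.2.1⟩
    · exact ⟨hab.2.2.1, hab.2.2.2⟩
  have hmemuv' : ∀ z : V, z ∈ (s(p,q) : Sym2 V) → z ≠ u ∧ z ≠ v := by
    intro z hz
    rw [Sym2.mem_iff] at hz
    rcases hz with rfl | rfl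
    · exact ⟨hpq.1, hpq.2.1⟩
    · exact ⟨hpq.2.2.1, hpq.2.2.2⟩
  show c1 s(⟨a, _⟩, ⟨b, _⟩) ≠ c1 s(⟨p, _⟩, ⟨q, _⟩)
  apply hc1
  · rw [SimpleGraph.mem_edgeSet, SimpleGraph.Subgraph.coe_adj]
    exact ⟨he, hab.1, hab.2.1, hab.2.2.1, hab.2.2.2⟩
  · rw [SimpleGraph.mem_edgeSet, SimpleGraph.Subgraph.coe_adj]
    exact ⟨hg, hpq.1, hpq.2.1, hpq.2.2.1, hpq.2.2.2⟩
  · intro hEq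
    apply hne'
    rw [Sym2.eq_iff] at hEq ⊢
    rcases hEq with ⟨h1, h2⟩ | ⟨h1, h2⟩
    · exact Or.inl ⟨congrArg Subtype.val h1, congrArg Subtype.val h2⟩
    · exact Or.inr ⟨congrArg Subtype.val h1, congrArg Subtype.val h2⟩
  · obtain ⟨pp, hpp, rr, hrr, hor⟩ := hsee
    refine ⟨⟨pp, Set.mem_univ pp⟩, ?_, ⟨rr, Set.mem_univ rr⟩, ?_, ?_⟩
    · rw [Sym2.mem_iff] at hpp ⊢
      rcases hpp with rfl | rfl
      · exact Or.inl rfl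
      · exact Or.inr rfl
    · rw [Sym2.mem_iff] at hrr ⊢
      rcases hrr with rfl | rfl
      · exact Or.inl rfl
      · exact Or.inr rfl
    · rcases hor with rfl | hadj
      · exact Or.inl rfl
      · refine Or.inr ?_
        rw [SimpleGraph.Subgraph.coe_adj]
        exact ⟨hadj, (hmemuv pp hpp).1, (hmemuv pp hpp).2, (hmemuv' rr hrr).1, (hmemuv' rr hrr).2⟩

end Base

lemma edge_rep {G : SimpleGraph V} [DecidableRel G.Adj] {a : V} {e : Sym2 V}
    (he : e ∈ G.edgeSet) (hae : a ∈ e) :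
    ∃ z, z ∈ G.neighborFinset a ∧ e = s(a, z) := by
  revert he hae
  refine Sym2.ind (fun b c => ?_) e
  intro he hae
  rw [SimpleGraph.mem_edgeSet] at he
  rw [Sym2.mem_iff] at hae
  rcases hae with rfl | rfl
  · exact ⟨c, (SimpleGraph.mem_neighborFinset _ _ _).2 he, rfl⟩
  · exact ⟨b, (SimpleGraph.mem_neighborFinset _ _ _).2 he.symm, Sym2.eq_swap⟩

lemma chain_step {G : SimpleGraph V} [DecidableRel G.Adj] {u v : V} {c : Sym2 V → Fin 13}
    {P : Finset (Sym2 V)} (hval : Valid G c (fun g => ¬(u ∈ g ∨ v ∈ g) ∨ g ∈ P))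
    {f : Sym2 V} (hfE : f ∈ G.edgeSet) (hfP : f ∉ P) (hfuv : u ∈ f ∨ v ∈ f)
    {m : V} {A : Finset V} (hmA : m ∈ A)
    (hcov : ∀ p ∈ f, ∀ r : V, p = r ∨ G.Adj p r → r = u ∨ r = v ∨ r ∈ A ∨ G.Adj m r)
    (hnum : P.card + (∑ z ∈ A, ((G.incidenceFinset z).filter (fun g => ¬(u ∈ g ∨ v ∈ g))).card)
        + (∑ z ∈ (((G.neighborFinset m).erase u).erase v) \ A, (G.degree z - 1)) ≤ 12) :
    ∃ c' : Sym2 V → Fin 13, Valid G c' (fun g => ¬(u ∈ g ∨ v ∈ g) ∨ g ∈ insert f P) := by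
  obtain ⟨c', hc'⟩ := step hfE (fun h => h.elim (fun h2 => h2 hfuv) hfP) hval
    (le_trans (master_count hmA f P hcov) hnum)
  exact ⟨c', valid_congr (fun g => by simp only [Finset.mem_insert]; tauto) hc'⟩

lemma card_insert_le' {s : Finset (Sym2 V)} {n : ℕ} (h : s.card ≤ n) (e : Sym2 V) :
    (insert e s).card ≤ n + 1 := le_trans (Finset.card_insert_le _ _) (by omega)

lemma main_aux {G : SimpleGraph V} [DecidableRel G.Adj]
    (hore : ∀ a b : V, G.Adj a b → G.degree a + G.degree b ≤ 7)
    (hG : ¬ G.HasStrongColoring 13)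
    (hmin : ∀ H : G.Subgraph, H ≠ ⊤ → H.coe.HasStrongColoring 13)
    (u v w : V) (huv : G.Adj u v) (huw : G.Adj u w) (hvw : G.Adj v w)
    (hab : G.degree u + G.degree v ≤ 6) (hba : G.degree u ≤ G.degree v) : False := by
  classical
  obtain ⟨c₀, hc₀⟩ := base_valid hmin huv
  have hc₀' : Valid G c₀ (fun g => ¬(u ∈ g ∨ v ∈ g) ∨ g ∈ (∅ : Finset (Sym2 V))) :=
    valid_congr (fun g => by simp) hc₀
  have hnuv : u ≠ v := huv.ne
  have hnuw : u ≠ w := huw.ne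
  have hnvw : v ≠ w := hvw.ne
  have hdu2 : 2 ≤ G.degree u := deg_ge_two huv huw hnvw
  have hdv2 : 2 ≤ G.degree v := deg_ge_two huv.symm hvw hnuw
  have hdw2 : 2 ≤ G.degree w := deg_ge_two huw.symm hvw.symm hnuv
  have h7uw := hore u w huw
  have h7vw := hore v w hvw
  have hFw := inc_filter_card_le₂ (G := G) hnuv huw.symm hvw.symm
  have hdu : G.degree u = 2 ∨ G.degree u = 3 := by omega
  have hdv : G.degree v = 2 ∨ G.degree v = 3 ∨ G.degree v = 4 := by omega
  rcases hdu with hdueq | hdueq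
  · -- degree u = 2
    have hNu := nbhd2 huv huw hnvw hdueq
    have hNu2 : ∀ r, G.Adj u r → r = v ∨ r = w := by
      intro r hr
      have h2 : r ∈ G.neighborFinset u := (SimpleGraph.mem_neighborFinset _ _ _).2 hr
      rw [hNu] at h2
      simpa using h2
    rcases hdv with hdveq | hdveq | hdveq
    · -- (2,2)
      have hNv := nbhd2 huv.symm hvw hnuw hdveq
      have hNv2 : ∀ r, G.Adj v r → r = u ∨ r = w := by
        intro r hr
        have h2 : r ∈ G.neighborFinset v := (SimpleGraph.mem_neighborFinset _ _ _).2 hr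
        rw [hNv] at h2
        simpa using h2
      obtain ⟨c1, hc1⟩ := chain_step (f := s(u,w)) (m := w) (A := {w}) hc₀'
        ((SimpleGraph.mem_edgeSet G).2 huw)
        (by simp)
        (Or.inl (by simp)) (by simp)
        (by
          intro p hp r hor
          rw [Sym2.mem_iff] at hp
          rcases hp with rfl | rfl
          · rcases hor with rfl | h
            · exact Or.inl rfl
            · rcases hNu2 r h with rfl | rfl
              · exact Or.inr (Or.inl rfl)
              · exact Or.inr (Or.inr (Or.inl (by simp)))
          · rcases hor with rfl | h
            · exact Or.inr (Or.inr (Or.inl (by simp)))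
            · exact Or.inr (Or.inr (Or.inr h)))
        (by
          have hsA : (∑ z ∈ ({w} : Finset V), ((G.incidenceFinset z).filter (fun g => ¬(u ∈ g ∨ v ∈ g))).card) = ((G.incidenceFinset w).filter (fun g => ¬(u ∈ g ∨ v ∈ g))).card := by
            rw [Finset.sum_singleton]
          have hrsub : ((((G.neighborFinset w).erase u).erase v) \ ({w} : Finset V)) ⊆ G.neighborFinset w := fun t ht => Finset.mem_of_mem_erase (Finset.mem_of_mem_erase (Finset.mem_sdiff.1 ht).1)
          have hr5 : (∑ z ∈ ((((G.neighborFinset w).erase u).erase v) \ ({w} : Finset V)), (G.degree z - 1)) ≤ 4 :=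
            le_trans (le_trans (ring_sum_le hore w _ hrsub) (Nat.mul_le_mul (ring_card_le₂ hnuv huw.symm hvw.symm) (le_refl _))) (prod_bound' (G.degree w) (by omega))
          simp only [Finset.card_empty]
          omega)
      obtain ⟨c2, hc2⟩ := chain_step (f := s(v,w)) (m := w) (A := {w}) hc1
        ((SimpleGraph.mem_edgeSet G).2 hvw)
        (by
          intro hmem
          simp only [Finset.mem_insert, Finset.notMem_empty, or_false] at hmem
          exact sym2_ne_left hnuv.symm hnvw hmem)
        (Or.inr (by simp)) (by simp)
        (by
          intro p hp r hor
          rw [Sym2.mem_iff] at hp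
          rcases hp with rfl | rfl
          · rcases hor with rfl | h
            · exact Or.inr (Or.inl rfl)
            · rcases hNv2 r h with rfl | rfl
              · exact Or.inl rfl
              · exact Or.inr (Or.inr (Or.inl (by simp)))
          · rcases hor with rfl | h
            · exact Or.inr (Or.inr (Or.inl (by simp)))
            · exact Or.inr (Or.inr (Or.inr h)))
        (by
          have hsA : (∑ z ∈ ({w} : Finset V), ((G.incidenceFinset z).filter (fun g => ¬(u ∈ g ∨ v ∈ g))).card) = ((G.incidenceFinset w).filter (fun g => ¬(u ∈ g ∨ v ∈ g))).card := by
            rw [Finset.sum_singleton]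
          have hrsub : ((((G.neighborFinset w).erase u).erase v) \ ({w} : Finset V)) ⊆ G.neighborFinset w := fun t ht => Finset.mem_of_mem_erase (Finset.mem_of_mem_erase (Finset.mem_sdiff.1 ht).1)
          have hr5 : (∑ z ∈ ((((G.neighborFinset w).erase u).erase v) \ ({w} : Finset V)), (G.degree z - 1)) ≤ 4 :=
            le_trans (le_trans (ring_sum_le hore w _ hrsub) (Nat.mul_le_mul (ring_card_le₂ hnuv huw.symm hvw.symm) (le_refl _))) (prod_bound' (G.degree w) (by omega))
          have hPc : ((insert (s(u,w)) (∅ : Finset (Sym2 V)))).card ≤ 1 := card_insert_le' (by simp) _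
          omega)
      obtain ⟨c3, hc3⟩ := chain_step (f := s(u,v)) (m := u) (A := {u,w}) hc2
        ((SimpleGraph.mem_edgeSet G).2 huv)
        (by
          intro hmem
          simp only [Finset.mem_insert, Finset.notMem_empty, or_false] at hmem
          rcases hmem with h | h
          · exact sym2_ne_left hnuv hnuw h
          · exact sym2_ne_right hnuv.symm hnvw h)
        (Or.inl (by simp)) (by simp)
        (by
          intro p hp r hor
          rw [Sym2.mem_iff] at hp
          rcases hp with rfl | rfl
          · rcases hor with rfl | h
            · exact Or.inl rfl
            · exact Or.inr (Or.inr (Or.inr h))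
          · rcases hor with rfl | h
            · exact Or.inr (Or.inl rfl)
            · rcases hNv2 r h with rfl | rfl
              · exact Or.inl rfl
              · exact Or.inr (Or.inr (Or.inl (by simp))))
        (by
          have hsA : (∑ z ∈ ({u,w} : Finset V), ((G.incidenceFinset z).filter (fun g => ¬(u ∈ g ∨ v ∈ g))).card) ≤ ((G.incidenceFinset u).filter (fun g => ¬(u ∈ g ∨ v ∈ g))).card + (((G.incidenceFinset w).filter (fun g => ¬(u ∈ g ∨ v ∈ g))).card) := by
            refine le_trans (sum_insert_le' _ _ _) (Nat.add_le_add_left ?_ _)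
            rw [Finset.sum_singleton]
          have hemp : ((((G.neighborFinset u).erase u).erase v) \ ({u,w} : Finset V)) = ∅ := by
            rw [Finset.sdiff_eq_empty_iff_subset]
            intro t ht
            have htv : t ≠ v := (Finset.mem_erase.1 ht).1
            have ht3 := Finset.mem_of_mem_erase (Finset.mem_of_mem_erase ht)
            rw [hNu] at ht3
            simp only [Finset.mem_insert, Finset.mem_singleton] at ht3 ⊢
            rcases ht3 with rfl | rfl
            · exact absurd rfl htv
            · tauto
          rw [hemp, Finset.sum_empty]
          have hPc : ((insert (s(v,w)) (insert (s(u,w)) (∅ : Finset (Sym2 V))))).card ≤ 2 := card_insert_le' (card_insert_le' (by simp) _) _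
          have hFu := inc_filter_card_u (G := G) (u := u) (v := v)
          omega)
      have hcover : ∀ e ∈ G.edgeSet, (¬(u ∈ e ∨ v ∈ e)) ∨ e ∈ (insert (s(u,v)) (insert (s(v,w)) (insert (s(u,w)) (∅ : Finset (Sym2 V))))) := by
        intro e he
        by_cases hu : u ∈ e
        · obtain ⟨z', hz', rfl⟩ := edge_rep he hu
          rw [hNu] at hz'
          right
          simp only [Finset.mem_insert, Finset.mem_singleton] at hz'
          rcases hz' with rfl | rfl <;> simp
        · by_cases hv : v ∈ e
          · obtain ⟨z', hz', rfl⟩ := edge_rep he hv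
            rw [hNv] at hz'
            right
            simp only [Finset.mem_insert, Finset.mem_singleton] at hz'
            rcases hz' with rfl | rfl <;> simp [Sym2.eq_iff]
          · exact Or.inl (fun h => h.elim hu hv)
      exact hG ⟨c3, fun e he f hf hne hsee => hc3 e he (hcover e he) f hf (hcover f hf) hne hsee⟩
    · -- (2,3)
      obtain ⟨y, hyu, hyw, hvy, hNv⟩ := nbhd3 huv.symm hvw hnuw hdveq
      have hyv : y ≠ v := hvy.ne'
      have h7vy := hore v y hvy
      have hFy := inc_filter_card_le₁v (G := G) (u := u) hvy.symm
      have hNv3 : ∀ r, G.Adj v r → r = u ∨ r = w ∨ r = y := by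
        intro r hr
        have h2 : r ∈ G.neighborFinset v := (SimpleGraph.mem_neighborFinset _ _ _).2 hr
        rw [hNv] at h2
        simpa using h2
      obtain ⟨c1, hc1⟩ := chain_step (f := s(v,y)) (m := y) (A := {w,y}) hc₀'
        ((SimpleGraph.mem_edgeSet G).2 hvy)
        (by simp)
        (Or.inr (by simp)) (by simp)
        (by
          intro p hp r hor
          rw [Sym2.mem_iff] at hp
          rcases hp with rfl | rfl
          · rcases hor with rfl | h
            · exact Or.inr (Or.inl rfl)
            · rcases hNv3 r h with rfl | rfl | rfl
              · exact Or.inl rfl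
              · exact Or.inr (Or.inr (Or.inl (by simp)))
              · exact Or.inr (Or.inr (Or.inl (by simp)))
          · rcases hor with rfl | h
            · exact Or.inr (Or.inr (Or.inl (by simp)))
            · exact Or.inr (Or.inr (Or.inr h)))
        (by
          have hsA : (∑ z ∈ ({w,y} : Finset V), ((G.incidenceFinset z).filter (fun g => ¬(u ∈ g ∨ v ∈ g))).card) ≤ ((G.incidenceFinset w).filter (fun g => ¬(u ∈ g ∨ v ∈ g))).card + (((G.incidenceFinset y).filter (fun g => ¬(u ∈ g ∨ v ∈ g))).card) := by
            refine le_trans (sum_insert_le' _ _ _) (Nat.add_le_add_left ?_ _)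
            rw [Finset.sum_singleton]
          have hrsub : ((((G.neighborFinset y).erase u).erase v) \ ({w,y} : Finset V)) ⊆ G.neighborFinset y := fun t ht => Finset.mem_of_mem_erase (Finset.mem_of_mem_erase (Finset.mem_sdiff.1 ht).1)
          have hr5 : (∑ z ∈ ((((G.neighborFinset y).erase u).erase v) \ ({w,y} : Finset V)), (G.degree z - 1)) ≤ 6 :=
            le_trans (le_trans (ring_sum_le hore y _ hrsub) (Nat.mul_le_mul (ring_card_le₁v hvy.symm) (le_refl _))) (prod_bound (G.degree y) (by omega))
          simp only [Finset.card_empty]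
          omega)
      obtain ⟨c2, hc2⟩ := chain_step (f := s(u,w)) (m := w) (A := {w}) hc1
        ((SimpleGraph.mem_edgeSet G).2 huw)
        (by
          intro hmem
          simp only [Finset.mem_insert, Finset.notMem_empty, or_false] at hmem
          exact sym2_ne_left hnuv hyu.symm hmem)
        (Or.inl (by simp)) (by simp)
        (by
          intro p hp r hor
          rw [Sym2.mem_iff] at hp
          rcases hp with rfl | rfl
          · rcases hor with rfl | h
            · exact Or.inl rfl
            · rcases hNu2 r h with rfl | rfl
              · exact Or.inr (Or.inl rfl)
              · exact Or.inr (Or.inr (Or.inl (by simp)))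
          · rcases hor with rfl | h
            · exact Or.inr (Or.inr (Or.inl (by simp)))
            · exact Or.inr (Or.inr (Or.inr h)))
        (by
          have hsA : (∑ z ∈ ({w} : Finset V), ((G.incidenceFinset z).filter (fun g => ¬(u ∈ g ∨ v ∈ g))).card) = ((G.incidenceFinset w).filter (fun g => ¬(u ∈ g ∨ v ∈ g))).card := by
            rw [Finset.sum_singleton]
          have hrsub : ((((G.neighborFinset w).erase u).erase v) \ ({w} : Finset V)) ⊆ G.neighborFinset w := fun t ht => Finset.mem_of_mem_erase (Finset.mem_of_mem_erase (Finset.mem_sdiff.1 ht).1)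
          have hr5 : (∑ z ∈ ((((G.neighborFinset w).erase u).erase v) \ ({w} : Finset V)), (G.degree z - 1)) ≤ 4 :=
            le_trans (le_trans (ring_sum_le hore w _ hrsub) (Nat.mul_le_mul (ring_card_le₂ hnuv huw.symm hvw.symm) (le_refl _))) (prod_bound' (G.degree w) (by omega))
          have hPc : ((insert (s(v,y)) (∅ : Finset (Sym2 V)))).card ≤ 1 := card_insert_le' (by simp) _
          omega)
      obtain ⟨c3, hc3⟩ := chain_step (f := s(v,w)) (m := w) (A := {w,y}) hc2
        ((SimpleGraph.mem_edgeSet G).2 hvw)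
        (by
          intro hmem
          simp only [Finset.mem_insert, Finset.notMem_empty, or_false] at hmem
          rcases hmem with h | h
          · exact sym2_ne_left hnuv.symm hnvw h
          · exact sym2_ne_right hnvw.symm hyw.symm h)
        (Or.inr (by simp)) (by simp)
        (by
          intro p hp r hor
          rw [Sym2.mem_iff] at hp
          rcases hp with rfl | rfl
          · rcases hor with rfl | h
            · exact Or.inr (Or.inl rfl)
            · rcases hNv3 r h with rfl | rfl | rfl
              · exact Or.inl rfl
              · exact Or.inr (Or.inr (Or.inl (by simp)))
              · exact Or.inr (Or.inr (Or.inl (by simp)))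
          · rcases hor with rfl | h
            · exact Or.inr (Or.inr (Or.inl (by simp)))
            · exact Or.inr (Or.inr (Or.inr h)))
        (by
          have hsA : (∑ z ∈ ({w,y} : Finset V), ((G.incidenceFinset z).filter (fun g => ¬(u ∈ g ∨ v ∈ g))).card) ≤ ((G.incidenceFinset w).filter (fun g => ¬(u ∈ g ∨ v ∈ g))).card + (((G.incidenceFinset y).filter (fun g => ¬(u ∈ g ∨ v ∈ g))).card) := by
            refine le_trans (sum_insert_le' _ _ _) (Nat.add_le_add_left ?_ _)
            rw [Finset.sum_singleton]
          have hrsub : ((((G.neighborFinset w).erase u).erase v) \ ({w,y} : Finset V)) ⊆ G.neighborFinset w := fun t ht => Finset.mem_of_mem_erase (Finset.mem_of_mem_erase (Finset.mem_sdiff.1 ht).1)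
          have hr5 : (∑ z ∈ ((((G.neighborFinset w).erase u).erase v) \ ({w,y} : Finset V)), (G.degree z - 1)) ≤ 4 :=
            le_trans (le_trans (ring_sum_le hore w _ hrsub) (Nat.mul_le_mul (ring_card_le₂ hnuv huw.symm hvw.symm) (le_refl _))) (prod_bound' (G.degree w) (by omega))
          have hPc : ((insert (s(u,w)) (insert (s(v,y)) (∅ : Finset (Sym2 V))))).card ≤ 2 := card_insert_le' (card_insert_le' (by simp) _) _
          omega)
      obtain ⟨c4, hc4⟩ := chain_step (f := s(u,v)) (m := u) (A := {u,w,y}) hc3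
        ((SimpleGraph.mem_edgeSet G).2 huv)
        (by
          intro hmem
          simp only [Finset.mem_insert, Finset.notMem_empty, or_false] at hmem
          rcases hmem with h | h | h
          · exact sym2_ne_left hnuv hnuw h
          · exact sym2_ne_right hnuv.symm hnvw h
          · exact sym2_ne_left hnuv hyu.symm h)
        (Or.inl (by simp)) (by simp)
        (by
          intro p hp r hor
          rw [Sym2.mem_iff] at hp
          rcases hp with rfl | rfl
          · rcases hor with rfl | h
            · exact Or.inl rfl
            · exact Or.inr (Or.inr (Or.inr h))
          · rcases hor with rfl | h
            · exact Or.inr (Or.inl rfl)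
            · rcases hNv3 r h with rfl | rfl | rfl
              · exact Or.inl rfl
              · exact Or.inr (Or.inr (Or.inl (by simp)))
              · exact Or.inr (Or.inr (Or.inl (by simp))))
        (by
          have hsA : (∑ z ∈ ({u,w,y} : Finset V), ((G.incidenceFinset z).filter (fun g => ¬(u ∈ g ∨ v ∈ g))).card) ≤ ((G.incidenceFinset u).filter (fun g => ¬(u ∈ g ∨ v ∈ g))).card + (((G.incidenceFinset w).filter (fun g => ¬(u ∈ g ∨ v ∈ g))).card + (((G.incidenceFinset y).filter (fun g => ¬(u ∈ g ∨ v ∈ g))).card)) := by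
            refine le_trans (sum_insert_le' _ _ _) (Nat.add_le_add_left ?_ _)
            refine le_trans (sum_insert_le' _ _ _) (Nat.add_le_add_left ?_ _)
            rw [Finset.sum_singleton]
          have hemp : ((((G.neighborFinset u).erase u).erase v) \ ({u,w,y} : Finset V)) = ∅ := by
            rw [Finset.sdiff_eq_empty_iff_subset]
            intro t ht
            have htv : t ≠ v := (Finset.mem_erase.1 ht).1
            have ht3 := Finset.mem_of_mem_erase (Finset.mem_of_mem_erase ht)
            rw [hNu] at ht3
            simp only [Finset.mem_insert, Finset.mem_singleton] at ht3 ⊢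
            rcases ht3 with rfl | rfl
            · exact absurd rfl htv
            · tauto
          rw [hemp, Finset.sum_empty]
          have hPc : ((insert (s(v,w)) (insert (s(u,w)) (insert (s(v,y)) (∅ : Finset (Sym2 V)))))).card ≤ 3 := card_insert_le' (card_insert_le' (card_insert_le' (by simp) _) _) _
          have hFu := inc_filter_card_u (G := G) (u := u) (v := v)
          omega)
      have hcover : ∀ e ∈ G.edgeSet, (¬(u ∈ e ∨ v ∈ e)) ∨ e ∈ (insert (s(u,v)) (insert (s(v,w)) (insert (s(u,w)) (insert (s(v,y)) (∅ : Finset (Sym2 V)))))) := by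
        intro e he
        by_cases hu : u ∈ e
        · obtain ⟨z', hz', rfl⟩ := edge_rep he hu
          rw [hNu] at hz'
          right
          simp only [Finset.mem_insert, Finset.mem_singleton] at hz'
          rcases hz' with rfl | rfl <;> simp
        · by_cases hv : v ∈ e
          · obtain ⟨z', hz', rfl⟩ := edge_rep he hv
            rw [hNv] at hz'
            right
            simp only [Finset.mem_insert, Finset.mem_singleton] at hz'
            rcases hz' with rfl | rfl | rfl <;> simp [Sym2.eq_iff]
          · exact Or.inl (fun h => h.elim hu hv)
      exact hG ⟨c4, fun e he f hf hne hsee => hc4 e he (hcover e he) f hf (hcover f hf) hne hsee⟩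
    · -- (2,4)
      obtain ⟨y, z, hyz, hyu, hyw, hzu, hzw, hvy, hvz, hNv⟩ := nbhd4 huv.symm hvw hnuw hdveq
      have hyv : y ≠ v := hvy.ne'
      have hzv : z ≠ v := hvz.ne'
      have h7vy := hore v y hvy
      have h7vz := hore v z hvz
      have hFy := inc_filter_card_le₁v (G := G) (u := u) hvy.symm
      have hFz := inc_filter_card_le₁v (G := G) (u := u) hvz.symm
      have hNv4 : ∀ r, G.Adj v r → r = u ∨ r = w ∨ r = y ∨ r = z := by
        intro r hr
        have h2 : r ∈ G.neighborFinset v := (SimpleGraph.mem_neighborFinset _ _ _).2 hr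
        rw [hNv] at h2
        simpa using h2
      obtain ⟨c1, hc1⟩ := chain_step (f := s(v,y)) (m := y) (A := {w,y,z}) hc₀'
        ((SimpleGraph.mem_edgeSet G).2 hvy)
        (by simp)
        (Or.inr (by simp)) (by simp)
        (by
          intro p hp r hor
          rw [Sym2.mem_iff] at hp
          rcases hp with rfl | rfl
          · rcases hor with rfl | h
            · exact Or.inr (Or.inl rfl)
            · rcases hNv4 r h with rfl | rfl | rfl | rfl
              · exact Or.inl rfl
              · exact Or.inr (Or.inr (Or.inl (by simp)))
              · exact Or.inr (Or.inr (Or.inl (by simp)))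
              · exact Or.inr (Or.inr (Or.inl (by simp)))
          · rcases hor with rfl | h
            · exact Or.inr (Or.inr (Or.inl (by simp)))
            · exact Or.inr (Or.inr (Or.inr h)))
        (by
          have hsA : (∑ z ∈ ({w,y,z} : Finset V), ((G.incidenceFinset z).filter (fun g => ¬(u ∈ g ∨ v ∈ g))).card) ≤ ((G.incidenceFinset w).filter (fun g => ¬(u ∈ g ∨ v ∈ g))).card + (((G.incidenceFinset y).filter (fun g => ¬(u ∈ g ∨ v ∈ g))).card + (((G.incidenceFinset z).filter (fun g => ¬(u ∈ g ∨ v ∈ g))).card)) := by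
            refine le_trans (sum_insert_le' _ _ _) (Nat.add_le_add_left ?_ _)
            refine le_trans (sum_insert_le' _ _ _) (Nat.add_le_add_left ?_ _)
            rw [Finset.sum_singleton]
          have hrsub : ((((G.neighborFinset y).erase u).erase v) \ ({w,y,z} : Finset V)) ⊆ G.neighborFinset y := fun t ht => Finset.mem_of_mem_erase (Finset.mem_of_mem_erase (Finset.mem_sdiff.1 ht).1)
          have hr5 : (∑ z ∈ ((((G.neighborFinset y).erase u).erase v) \ ({w,y,z} : Finset V)), (G.degree z - 1)) ≤ 6 :=
            le_trans (le_trans (ring_sum_le hore y _ hrsub) (Nat.mul_le_mul (ring_card_le₁v hvy.symm) (le_refl _))) (prod_bound (G.degree y) (by omega))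
          simp only [Finset.card_empty]
          omega)
      obtain ⟨c2, hc2⟩ := chain_step (f := s(v,z)) (m := z) (A := {w,y,z}) hc1
        ((SimpleGraph.mem_edgeSet G).2 hvz)
        (by
          intro hmem
          simp only [Finset.mem_insert, Finset.notMem_empty, or_false] at hmem
          exact sym2_ne_right hvz.ne' hyz.symm hmem)
        (Or.inr (by simp)) (by simp)
        (by
          intro p hp r hor
          rw [Sym2.mem_iff] at hp
          rcases hp with rfl | rfl
          · rcases hor with rfl | h
            · exact Or.inr (Or.inl rfl)
            · rcases hNv4 r h with rfl | rfl | rfl | rfl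
              · exact Or.inl rfl
              · exact Or.inr (Or.inr (Or.inl (by simp)))
              · exact Or.inr (Or.inr (Or.inl (by simp)))
              · exact Or.inr (Or.inr (Or.inl (by simp)))
          · rcases hor with rfl | h
            · exact Or.inr (Or.inr (Or.inl (by simp)))
            · exact Or.inr (Or.inr (Or.inr h)))
        (by
          have hsA : (∑ z ∈ ({w,y,z} : Finset V), ((G.incidenceFinset z).filter (fun g => ¬(u ∈ g ∨ v ∈ g))).card) ≤ ((G.incidenceFinset w).filter (fun g => ¬(u ∈ g ∨ v ∈ g))).card + (((G.incidenceFinset y).filter (fun g => ¬(u ∈ g ∨ v ∈ g))).card + (((G.incidenceFinset z).filter (fun g => ¬(u ∈ g ∨ v ∈ g))).card)) := by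
            refine le_trans (sum_insert_le' _ _ _) (Nat.add_le_add_left ?_ _)
            refine le_trans (sum_insert_le' _ _ _) (Nat.add_le_add_left ?_ _)
            rw [Finset.sum_singleton]
          have hrsub : ((((G.neighborFinset z).erase u).erase v) \ ({w,y,z} : Finset V)) ⊆ G.neighborFinset z := fun t ht => Finset.mem_of_mem_erase (Finset.mem_of_mem_erase (Finset.mem_sdiff.1 ht).1)
          have hr5 : (∑ z ∈ ((((G.neighborFinset z).erase u).erase v) \ ({w,y,z} : Finset V)), (G.degree z - 1)) ≤ 6 :=
            le_trans (le_trans (ring_sum_le hore z _ hrsub) (Nat.mul_le_mul (ring_card_le₁v hvz.symm) (le_refl _))) (prod_bound (G.degree z) (by omega))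
          have hPc : ((insert (s(v,y)) (∅ : Finset (Sym2 V)))).card ≤ 1 := card_insert_le' (by simp) _
          omega)
      obtain ⟨c3, hc3⟩ := chain_step (f := s(u,w)) (m := w) (A := {w}) hc2
        ((SimpleGraph.mem_edgeSet G).2 huw)
        (by
          intro hmem
          simp only [Finset.mem_insert, Finset.notMem_empty, or_false] at hmem
          rcases hmem with h | h
          · exact sym2_ne_left hnuv hzu.symm h
          · exact sym2_ne_left hnuv hyu.symm h)
        (Or.inl (by simp)) (by simp)
        (by
          intro p hp r hor
          rw [Sym2.mem_iff] at hp
          rcases hp with rfl | rfl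
          · rcases hor with rfl | h
            · exact Or.inl rfl
            · rcases hNu2 r h with rfl | rfl
              · exact Or.inr (Or.inl rfl)
              · exact Or.inr (Or.inr (Or.inl (by simp)))
          · rcases hor with rfl | h
            · exact Or.inr (Or.inr (Or.inl (by simp)))
            · exact Or.inr (Or.inr (Or.inr h)))
        (by
          have hsA : (∑ z ∈ ({w} : Finset V), ((G.incidenceFinset z).filter (fun g => ¬(u ∈ g ∨ v ∈ g))).card) = ((G.incidenceFinset w).filter (fun g => ¬(u ∈ g ∨ v ∈ g))).card := by
            rw [Finset.sum_singleton]
          have hrsub : ((((G.neighborFinset w).erase u).erase v) \ ({w} : Finset V)) ⊆ G.neighborFinset w := fun t ht => Finset.mem_of_mem_erase (Finset.mem_of_mem_erase (Finset.mem_sdiff.1 ht).1)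
          have hr5 : (∑ z ∈ ((((G.neighborFinset w).erase u).erase v) \ ({w} : Finset V)), (G.degree z - 1)) ≤ 4 :=
            le_trans (le_trans (ring_sum_le hore w _ hrsub) (Nat.mul_le_mul (ring_card_le₂ hnuv huw.symm hvw.symm) (le_refl _))) (prod_bound' (G.degree w) (by omega))
          have hPc : ((insert (s(v,z)) (insert (s(v,y)) (∅ : Finset (Sym2 V))))).card ≤ 2 := card_insert_le' (card_insert_le' (by simp) _) _
          omega)
      obtain ⟨c4, hc4⟩ := chain_step (f := s(v,w)) (m := w) (A := {w,y,z}) hc3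
        ((SimpleGraph.mem_edgeSet G).2 hvw)
        (by
          intro hmem
          simp only [Finset.mem_insert, Finset.notMem_empty, or_false] at hmem
          rcases hmem with h | h | h
          · exact sym2_ne_left hnuv.symm hnvw h
          · exact sym2_ne_right hnvw.symm hzw.symm h
          · exact sym2_ne_right hnvw.symm hyw.symm h)
        (Or.inr (by simp)) (by simp)
        (by
          intro p hp r hor
          rw [Sym2.mem_iff] at hp
          rcases hp with rfl | rfl
          · rcases hor with rfl | h
            · exact Or.inr (Or.inl rfl)
            · rcases hNv4 r h with rfl | rfl | rfl | rfl
              · exact Or.inl rfl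
              · exact Or.inr (Or.inr (Or.inl (by simp)))
              · exact Or.inr (Or.inr (Or.inl (by simp)))
              · exact Or.inr (Or.inr (Or.inl (by simp)))
          · rcases hor with rfl | h
            · exact Or.inr (Or.inr (Or.inl (by simp)))
            · exact Or.inr (Or.inr (Or.inr h)))
        (by
          have hsA : (∑ z ∈ ({w,y,z} : Finset V), ((G.incidenceFinset z).filter (fun g => ¬(u ∈ g ∨ v ∈ g))).card) ≤ ((G.incidenceFinset w).filter (fun g => ¬(u ∈ g ∨ v ∈ g))).card + (((G.incidenceFinset y).filter (fun g => ¬(u ∈ g ∨ v ∈ g))).card + (((G.incidenceFinset z).filter (fun g => ¬(u ∈ g ∨ v ∈ g))).card)) := by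
            refine le_trans (sum_insert_le' _ _ _) (Nat.add_le_add_left ?_ _)
            refine le_trans (sum_insert_le' _ _ _) (Nat.add_le_add_left ?_ _)
            rw [Finset.sum_singleton]
          have hrsub : ((((G.neighborFinset w).erase u).erase v) \ ({w,y,z} : Finset V)) ⊆ G.neighborFinset w := fun t ht => Finset.mem_of_mem_erase (Finset.mem_of_mem_erase (Finset.mem_sdiff.1 ht).1)
          have hr5 : (∑ z ∈ ((((G.neighborFinset w).erase u).erase v) \ ({w,y,z} : Finset V)), (G.degree z - 1)) ≤ 4 :=
            le_trans (le_trans (ring_sum_le hore w _ hrsub) (Nat.mul_le_mul (ring_card_le₂ hnuv huw.symm hvw.symm) (le_refl _))) (prod_bound' (G.degree w) (by omega))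
          have hPc : ((insert (s(u,w)) (insert (s(v,z)) (insert (s(v,y)) (∅ : Finset (Sym2 V)))))).card ≤ 3 := card_insert_le' (card_insert_le' (card_insert_le' (by simp) _) _) _
          omega)
      obtain ⟨c5, hc5⟩ := chain_step (f := s(u,v)) (m := u) (A := {u,w,y,z}) hc4
        ((SimpleGraph.mem_edgeSet G).2 huv)
        (by
          intro hmem
          simp only [Finset.mem_insert, Finset.notMem_empty, or_false] at hmem
          rcases hmem with h | h | h | h
          · exact sym2_ne_left hnuv hnuw h
          · exact sym2_ne_right hnuv.symm hnvw h
          · exact sym2_ne_left hnuv hzu.symm h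
          · exact sym2_ne_left hnuv hyu.symm h)
        (Or.inl (by simp)) (by simp)
        (by
          intro p hp r hor
          rw [Sym2.mem_iff] at hp
          rcases hp with rfl | rfl
          · rcases hor with rfl | h
            · exact Or.inl rfl
            · exact Or.inr (Or.inr (Or.inr h))
          · rcases hor with rfl | h
            · exact Or.inr (Or.inl rfl)
            · rcases hNv4 r h with rfl | rfl | rfl | rfl
              · exact Or.inl rfl
              · exact Or.inr (Or.inr (Or.inl (by simp)))
              · exact Or.inr (Or.inr (Or.inl (by simp)))
              · exact Or.inr (Or.inr (Or.inl (by simp))))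
        (by
          have hsA : (∑ z ∈ ({u,w,y,z} : Finset V), ((G.incidenceFinset z).filter (fun g => ¬(u ∈ g ∨ v ∈ g))).card) ≤ ((G.incidenceFinset u).filter (fun g => ¬(u ∈ g ∨ v ∈ g))).card + (((G.incidenceFinset w).filter (fun g => ¬(u ∈ g ∨ v ∈ g))).card + (((G.incidenceFinset y).filter (fun g => ¬(u ∈ g ∨ v ∈ g))).card + (((G.incidenceFinset z).filter (fun g => ¬(u ∈ g ∨ v ∈ g))).card))) := by
            refine le_trans (sum_insert_le' _ _ _) (Nat.add_le_add_left ?_ _)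
            refine le_trans (sum_insert_le' _ _ _) (Nat.add_le_add_left ?_ _)
            refine le_trans (sum_insert_le' _ _ _) (Nat.add_le_add_left ?_ _)
            rw [Finset.sum_singleton]
          have hemp : ((((G.neighborFinset u).erase u).erase v) \ ({u,w,y,z} : Finset V)) = ∅ := by
            rw [Finset.sdiff_eq_empty_iff_subset]
            intro t ht
            have htv : t ≠ v := (Finset.mem_erase.1 ht).1
            have ht3 := Finset.mem_of_mem_erase (Finset.mem_of_mem_erase ht)
            rw [hNu] at ht3
            simp only [Finset.mem_insert, Finset.mem_singleton] at ht3 ⊢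
            rcases ht3 with rfl | rfl
            · exact absurd rfl htv
            · tauto
          rw [hemp, Finset.sum_empty]
          have hPc : ((insert (s(v,w)) (insert (s(u,w)) (insert (s(v,z)) (insert (s(v,y)) (∅ : Finset (Sym2 V))))))).card ≤ 4 := card_insert_le' (card_insert_le' (card_insert_le' (card_insert_le' (by simp) _) _) _) _
          have hFu := inc_filter_card_u (G := G) (u := u) (v := v)
          omega)
      have hcover : ∀ e ∈ G.edgeSet, (¬(u ∈ e ∨ v ∈ e)) ∨ e ∈ (insert (s(u,v)) (insert (s(v,w)) (insert (s(u,w)) (insert (s(v,z)) (insert (s(v,y)) (∅ : Finset (Sym2 V))))))) := by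
        intro e he
        by_cases hu : u ∈ e
        · obtain ⟨z', hz', rfl⟩ := edge_rep he hu
          rw [hNu] at hz'
          right
          simp only [Finset.mem_insert, Finset.mem_singleton] at hz'
          rcases hz' with rfl | rfl <;> simp
        · by_cases hv : v ∈ e
          · obtain ⟨z', hz', rfl⟩ := edge_rep he hv
            rw [hNv] at hz'
            right
            simp only [Finset.mem_insert, Finset.mem_singleton] at hz'
            rcases hz' with rfl | rfl | rfl | rfl <;> simp [Sym2.eq_iff]
          · exact Or.inl (fun h => h.elim hu hv)
      exact hG ⟨c5, fun e he f hf hne hsee => hc5 e he (hcover e he) f hf (hcover f hf) hne hsee⟩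
  · -- degree u = 3, so degree v = 3
    have hdveq : G.degree v = 3 := by omega
    obtain ⟨x, hxv, hxw, hux, hNu⟩ := nbhd3 huv huw hnvw hdueq
    obtain ⟨y, hyu, hyw, hvy, hNv⟩ := nbhd3 huv.symm hvw hnuw hdveq
    have hxu : x ≠ u := hux.ne'
    have hyv : y ≠ v := hvy.ne'
    have h7ux := hore u x hux
    have h7vy := hore v y hvy
    have hFx := inc_filter_card_le₁ (G := G) (v := v) hux.symm
    have hFy := inc_filter_card_le₁v (G := G) (u := u) hvy.symm
    have hNu3 : ∀ r, G.Adj u r → r = v ∨ r = w ∨ r = x := by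
      intro r hr
      have : r ∈ G.neighborFinset u := (SimpleGraph.mem_neighborFinset _ _ _).2 hr
      rw [hNu] at this
      simpa using this
    have hNv3 : ∀ r, G.Adj v r → r = u ∨ r = w ∨ r = y := by
      intro r hr
      have : r ∈ G.neighborFinset v := (SimpleGraph.mem_neighborFinset _ _ _).2 hr
      rw [hNv] at this
      simpa using this
    -- Step 1 : color s(u,x)
    obtain ⟨c1, hc1⟩ := chain_step (f := s(u,x)) (m := x) (A := {w,x}) hc₀'
      ((SimpleGraph.mem_edgeSet G).2 hux) (by simp) (Or.inl (by simp)) (by simp)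
      (by
        intro p hp r hor
        rw [Sym2.mem_iff] at hp
        rcases hp with rfl | rfl
        · rcases hor with rfl | h
          · exact Or.inl rfl
          · rcases hNu3 r h with rfl | rfl | rfl
            · exact Or.inr (Or.inl rfl)
            · exact Or.inr (Or.inr (Or.inl (by simp)))
            · exact Or.inr (Or.inr (Or.inl (by simp)))
        · rcases hor with rfl | h
          · exact Or.inr (Or.inr (Or.inl (by simp)))
          · exact Or.inr (Or.inr (Or.inr h)))
      (by
        have hsA : ∑ z ∈ ({w,x} : Finset V),
            ((G.incidenceFinset z).filter (fun g => ¬(u ∈ g ∨ v ∈ g))).card ≤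
            ((G.incidenceFinset w).filter (fun g => ¬(u ∈ g ∨ v ∈ g))).card +
            ((G.incidenceFinset x).filter (fun g => ¬(u ∈ g ∨ v ∈ g))).card := by
          refine le_trans (sum_insert_le' _ _ _) ?_
          rw [Finset.sum_singleton]
        have hrsub : ((((G.neighborFinset x).erase u).erase v) \ ({w,x} : Finset V)) ⊆
            G.neighborFinset x := fun t ht =>
          Finset.mem_of_mem_erase (Finset.mem_of_mem_erase (Finset.mem_sdiff.1 ht).1)
        have hr3 : (∑ z ∈ (((G.neighborFinset x).erase u).erase v) \ ({w,x} : Finset V),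
            (G.degree z - 1)) ≤ (G.degree x - 1) * (6 - G.degree x) :=
          le_trans (ring_sum_le hore x _ hrsub)
            (Nat.mul_le_mul (ring_card_le₁ hux.symm) (le_refl _))
        have hr5 : (∑ z ∈ (((G.neighborFinset x).erase u).erase v) \ ({w,x} : Finset V),
            (G.degree z - 1)) ≤ 6 := le_trans hr3 (prod_bound (G.degree x) (by omega))
        simp only [Finset.card_empty]
        omega)
    -- Step 2 : color s(v,y)
    obtain ⟨c2, hc2⟩ := chain_step (f := s(v,y)) (m := y) (A := {w,y}) hc1
      ((SimpleGraph.mem_edgeSet G).2 hvy)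
      (by
        intro hmem
        simp only [Finset.mem_insert, Finset.notMem_empty, or_false] at hmem
        exact sym2_ne_left hnuv.symm hxv.symm hmem)
      (Or.inr (by simp)) (by simp)
      (by
        intro p hp r hor
        rw [Sym2.mem_iff] at hp
        rcases hp with rfl | rfl
        · rcases hor with rfl | h
          · exact Or.inr (Or.inl rfl)
          · rcases hNv3 r h with rfl | rfl | rfl
            · exact Or.inl rfl
            · exact Or.inr (Or.inr (Or.inl (by simp)))
            · exact Or.inr (Or.inr (Or.inl (by simp)))
        · rcases hor with rfl | h
          · exact Or.inr (Or.inr (Or.inl (by simp)))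
          · exact Or.inr (Or.inr (Or.inr h)))
      (by
        have hsA : ∑ z ∈ ({w,y} : Finset V),
            ((G.incidenceFinset z).filter (fun g => ¬(u ∈ g ∨ v ∈ g))).card ≤
            ((G.incidenceFinset w).filter (fun g => ¬(u ∈ g ∨ v ∈ g))).card +
            ((G.incidenceFinset y).filter (fun g => ¬(u ∈ g ∨ v ∈ g))).card := by
          refine le_trans (sum_insert_le' _ _ _) ?_
          rw [Finset.sum_singleton]
        have hrsub : ((((G.neighborFinset y).erase u).erase v) \ ({w,y} : Finset V)) ⊆
            G.neighborFinset y := fun t ht =>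
          Finset.mem_of_mem_erase (Finset.mem_of_mem_erase (Finset.mem_sdiff.1 ht).1)
        have hr3 : (∑ z ∈ (((G.neighborFinset y).erase u).erase v) \ ({w,y} : Finset V),
            (G.degree z - 1)) ≤ (G.degree y - 1) * (6 - G.degree y) :=
          le_trans (ring_sum_le hore y _ hrsub)
            (Nat.mul_le_mul (ring_card_le₁v hvy.symm) (le_refl _))
        have hr5 : (∑ z ∈ (((G.neighborFinset y).erase u).erase v) \ ({w,y} : Finset V),
            (G.degree z - 1)) ≤ 6 := le_trans hr3 (prod_bound (G.degree y) (by omega))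
        have hPc : (insert (s(u,x)) (∅ : Finset (Sym2 V))).card ≤ 1 :=
          card_insert_le' (by simp) _
        omega)
    -- Step 3 : color s(u,w)
    obtain ⟨c3, hc3⟩ := chain_step (f := s(u,w)) (m := w) (A := {w,x}) hc2
      ((SimpleGraph.mem_edgeSet G).2 huw)
      (by
        intro hmem
        simp only [Finset.mem_insert, Finset.notMem_empty, or_false] at hmem
        rcases hmem with h | h
        · exact sym2_ne_left hnuv hyu.symm h
        · exact sym2_ne_right hnuw.symm hxw.symm h)
      (Or.inl (by simp)) (by simp)
      (by
        intro p hp r hor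
        rw [Sym2.mem_iff] at hp
        rcases hp with rfl | rfl
        · rcases hor with rfl | h
          · exact Or.inl rfl
          · rcases hNu3 r h with rfl | rfl | rfl
            · exact Or.inr (Or.inl rfl)
            · exact Or.inr (Or.inr (Or.inl (by simp)))
            · exact Or.inr (Or.inr (Or.inl (by simp)))
        · rcases hor with rfl | h
          · exact Or.inr (Or.inr (Or.inl (by simp)))
          · exact Or.inr (Or.inr (Or.inr h)))
      (by
        have hsA : ∑ z ∈ ({w,x} : Finset V),
            ((G.incidenceFinset z).filter (fun g => ¬(u ∈ g ∨ v ∈ g))).card ≤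
            ((G.incidenceFinset w).filter (fun g => ¬(u ∈ g ∨ v ∈ g))).card +
            ((G.incidenceFinset x).filter (fun g => ¬(u ∈ g ∨ v ∈ g))).card := by
          refine le_trans (sum_insert_le' _ _ _) ?_
          rw [Finset.sum_singleton]
        have hrsub : ((((G.neighborFinset w).erase u).erase v) \ ({w,x} : Finset V)) ⊆
            G.neighborFinset w := fun t ht =>
          Finset.mem_of_mem_erase (Finset.mem_of_mem_erase (Finset.mem_sdiff.1 ht).1)
        have hr3 : (∑ z ∈ (((G.neighborFinset w).erase u).erase v) \ ({w,x} : Finset V),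
            (G.degree z - 1)) ≤ (G.degree w - 2) * (6 - G.degree w) :=
          le_trans (ring_sum_le hore w _ hrsub)
            (Nat.mul_le_mul (ring_card_le₂ hnuv huw.symm hvw.symm) (le_refl _))
        have hr5 : (∑ z ∈ (((G.neighborFinset w).erase u).erase v) \ ({w,x} : Finset V),
            (G.degree z - 1)) ≤ 4 := le_trans hr3 (prod_bound' (G.degree w) (by omega))
        have hPc : (insert (s(v,y)) (insert (s(u,x)) (∅ : Finset (Sym2 V)))).card ≤ 2 :=
          card_insert_le' (card_insert_le' (by simp) _) _
        omega)
    -- Step 4 : color s(v,w)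
    obtain ⟨c4, hc4⟩ := chain_step (f := s(v,w)) (m := w) (A := {w,y}) hc3
      ((SimpleGraph.mem_edgeSet G).2 hvw)
      (by
        intro hmem
        simp only [Finset.mem_insert, Finset.notMem_empty, or_false] at hmem
        rcases hmem with h | h | h
        · exact sym2_ne_left hnuv.symm hnvw h
        · exact sym2_ne_right hnvw.symm hyw.symm h
        · exact sym2_ne_left hnuv.symm hxv.symm h)
      (Or.inr (by simp)) (by simp)
      (by
        intro p hp r hor
        rw [Sym2.mem_iff] at hp
        rcases hp with rfl | rfl
        · rcases hor with rfl | h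
          · exact Or.inr (Or.inl rfl)
          · rcases hNv3 r h with rfl | rfl | rfl
            · exact Or.inl rfl
            · exact Or.inr (Or.inr (Or.inl (by simp)))
            · exact Or.inr (Or.inr (Or.inl (by simp)))
        · rcases hor with rfl | h
          · exact Or.inr (Or.inr (Or.inl (by simp)))
          · exact Or.inr (Or.inr (Or.inr h)))
      (by
        have hsA : ∑ z ∈ ({w,y} : Finset V),
            ((G.incidenceFinset z).filter (fun g => ¬(u ∈ g ∨ v ∈ g))).card ≤
            ((G.incidenceFinset w).filter (fun g => ¬(u ∈ g ∨ v ∈ g))).card +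
            ((G.incidenceFinset y).filter (fun g => ¬(u ∈ g ∨ v ∈ g))).card := by
          refine le_trans (sum_insert_le' _ _ _) ?_
          rw [Finset.sum_singleton]
        have hrsub : ((((G.neighborFinset w).erase u).erase v) \ ({w,y} : Finset V)) ⊆
            G.neighborFinset w := fun t ht =>
          Finset.mem_of_mem_erase (Finset.mem_of_mem_erase (Finset.mem_sdiff.1 ht).1)
        have hr3 : (∑ z ∈ (((G.neighborFinset w).erase u).erase v) \ ({w,y} : Finset V),
            (G.degree z - 1)) ≤ (G.degree w - 2) * (6 - G.degree w) :=
          le_trans (ring_sum_le hore w _ hrsub)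
            (Nat.mul_le_mul (ring_card_le₂ hnuv huw.symm hvw.symm) (le_refl _))
        have hr5 : (∑ z ∈ (((G.neighborFinset w).erase u).erase v) \ ({w,y} : Finset V),
            (G.degree z - 1)) ≤ 4 := le_trans hr3 (prod_bound' (G.degree w) (by omega))
        have hPc : (insert (s(u,w)) (insert (s(v,y)) (insert (s(u,x))
            (∅ : Finset (Sym2 V))))).card ≤ 3 :=
          card_insert_le' (card_insert_le' (card_insert_le' (by simp) _) _) _
        omega)
    -- Step 5 : color s(u,v)
    obtain ⟨c5, hc5⟩ := chain_step (f := s(u,v)) (m := u) (A := {u,w,x,y}) hc4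
      ((SimpleGraph.mem_edgeSet G).2 huv)
      (by
        intro hmem
        simp only [Finset.mem_insert, Finset.notMem_empty, or_false] at hmem
        rcases hmem with h | h | h | h
        · exact sym2_ne_left hnuv hnuw h
        · exact sym2_ne_right hnuv.symm hnvw h
        · exact sym2_ne_left hnuv hyu.symm h
        · exact sym2_ne_right hnuv.symm hxv.symm h)
      (Or.inl (by simp)) (by simp)
      (by
        intro p hp r hor
        rw [Sym2.mem_iff] at hp
        rcases hp with rfl | rfl
        · rcases hor with rfl | h
          · exact Or.inl rfl
          · exact Or.inr (Or.inr (Or.inr h))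
        · rcases hor with rfl | h
          · exact Or.inr (Or.inl rfl)
          · rcases hNv3 r h with rfl | rfl | rfl
            · exact Or.inl rfl
            · exact Or.inr (Or.inr (Or.inl (by simp)))
            · exact Or.inr (Or.inr (Or.inl (by simp))))
      (by
        have hsA : ∑ z ∈ ({u,w,x,y} : Finset V),
            ((G.incidenceFinset z).filter (fun g => ¬(u ∈ g ∨ v ∈ g))).card ≤
            ((G.incidenceFinset u).filter (fun g => ¬(u ∈ g ∨ v ∈ g))).card +
            (((G.incidenceFinset w).filter (fun g => ¬(u ∈ g ∨ v ∈ g))).card +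
            (((G.incidenceFinset x).filter (fun g => ¬(u ∈ g ∨ v ∈ g))).card +
            ((G.incidenceFinset y).filter (fun g => ¬(u ∈ g ∨ v ∈ g))).card)) := by
          refine le_trans (sum_insert_le' _ _ _) (Nat.add_le_add_left ?_ _)
          refine le_trans (sum_insert_le' _ _ _) (Nat.add_le_add_left ?_ _)
          refine le_trans (sum_insert_le' _ _ _) (Nat.add_le_add_left ?_ _)
          rw [Finset.sum_singleton]
        have hFu := inc_filter_card_u (G := G) (u := u) (v := v)
        have hemp : ((((G.neighborFinset u).erase u).erase v) \ ({u,w,x,y} : Finset V)) = ∅ := by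
          rw [Finset.sdiff_eq_empty_iff_subset]
          intro t ht
          have htv : t ≠ v := (Finset.mem_erase.1 ht).1
          have ht2 := Finset.mem_of_mem_erase ht
          have ht3 := Finset.mem_of_mem_erase ht2
          rw [hNu] at ht3
          simp only [Finset.mem_insert, Finset.mem_singleton] at ht3 ⊢
          rcases ht3 with rfl | rfl | rfl
          · exact absurd rfl htv
          · tauto
          · tauto
        rw [hemp, Finset.sum_empty]
        have hPc : (insert (s(v,w)) (insert (s(u,w)) (insert (s(v,y)) (insert (s(u,x))
            (∅ : Finset (Sym2 V)))))).card ≤ 4 :=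
          card_insert_le' (card_insert_le' (card_insert_le' (card_insert_le' (by simp) _) _) _) _
        omega)
    -- conclude
    have hcover : ∀ e ∈ G.edgeSet, (¬(u ∈ e ∨ v ∈ e)) ∨ e ∈ (insert (s(u,v)) (insert (s(v,w))
        (insert (s(u,w)) (insert (s(v,y)) (insert (s(u,x)) (∅ : Finset (Sym2 V))))))) := by
      intro e he
      by_cases hu : u ∈ e
      · obtain ⟨z, hz, rfl⟩ := edge_rep he hu
        rw [hNu] at hz
        right
        simp only [Finset.mem_insert, Finset.mem_singleton] at hz
        rcases hz with rfl | rfl | rfl <;> simp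
      · by_cases hv : v ∈ e
        · obtain ⟨z, hz, rfl⟩ := edge_rep he hv
          rw [hNv] at hz
          right
          simp only [Finset.mem_insert, Finset.mem_singleton] at hz
          rcases hz with rfl | rfl | rfl <;> simp [Sym2.eq_iff]
        · exact Or.inl (fun h => h.elim hu hv)
    exact hG ⟨c5, fun e he f hf hne hsee =>
      hc5 e he (hcover e he) f hf (hcover f hf) hne hsee⟩

end StrongAux

theorem statement3 {V : Type*} [Fintype V] [DecidableEq V]
    (G : SimpleGraph V) [DecidableRel G.Adj]
    (hore : ∀ u v : V, G.Adj u v → G.degree u + G.degree v ≤ 7)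
    (hG : ¬ G.HasStrongColoring 13)
    (hmin : ∀ H : G.Subgraph, H ≠ ⊤ → H.coe.HasStrongColoring 13) :
    G.CliqueFree 3 := by
  intro s hs
  rw [SimpleGraph.is3Clique_iff] at hs
  obtain ⟨a, b, c, hab, hac, hbc, rfl⟩ := hs
  have h1 := hore a b hab
  have h2 := hore a c hac
  have h3 := hore b c hbc
  by_cases c1 : G.degree a + G.degree b ≤ 6
  · by_cases c2 : G.degree a ≤ G.degree b
    · exact StrongAux.main_aux hore hG hmin a b c hab hac hbc c1 c2
    · exact StrongAux.main_aux hore hG hmin b a c hab.symm hbc hac (by omega) (by omega)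
  · by_cases c3 : G.degree a + G.degree c ≤ 6
    · by_cases c4 : G.degree a ≤ G.degree c
      · exact StrongAux.main_aux hore hG hmin a c b hac hab hbc.symm c3 c4
      · exact StrongAux.main_aux hore hG hmin c a b hac.symm hbc.symm hab (by omega) (by omega)
    · have c5 : G.degree b + G.degree c ≤ 6 := by omega
      by_cases c6 : G.degree b ≤ G.degree c
      · exact StrongAux.main_aux hore hG hmin b c a hbc hab.symm hac.symm c5 c6
      · exact StrongAux.main_aux hore hG hmin c b a hbc.symm hac.symm hab.symm (by omega) (by omega)
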